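/- For every positive integer p, π·J_p = -p²·ln p + (ln(2π) - γ)·p² - p + 2p²·C_p. -/

import Mathlib

open Real Filter Topology Finset

/-- The `n`-th harmonic number `H_n = ∑_{k=1}^n 1/k` (with `H 0 = 0`). -/
noncomputable def H (n : ℕ) : ℝ := ∑ k ∈ Finset.range n, (1 : ℝ) / (k + 1)

/-- The sum of cotangents `J_p = ∑_{k=1}^{p-1} k·cot(kπ/p)`. -/
noncomputable def Jp (p : ℕ) : ℝ := ∑ k ∈ Finset.Icc 1 (p - 1), (k : ℝ) * Real.cot (k * π / p)

local notation "γ" => Real.eulerMascheroniConstant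

-- ==== from t1.lean ====


noncomputable def lg : ℝ → ℝ := Real.log ∘ Real.Gamma

lemma lg_diff {x : ℝ} (hx : 0 < x) : DifferentiableAt ℝ lg x := by
  refine ((Real.differentiableAt_Gamma ?_).log (Real.Gamma_ne_zero ?_)) <;>
    exact fun m ↦ (((neg_nonpos.mpr (Nat.cast_nonneg m)).trans_lt hx).ne')

lemma lg_rec {x : ℝ} (hx : 0 < x) : lg (x + 1) = lg x + Real.log x := by
  simp only [lg, Function.comp_apply, Real.Gamma_add_one hx.ne',
    Real.log_mul hx.ne' (Real.Gamma_pos_of_pos hx).ne', add_comm]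

lemma deriv_lg_rec {x : ℝ} (hx : 0 < x) : deriv lg (x + 1) = deriv lg x + 1 / x := by
  rw [← deriv_comp_add_const, one_div, ← Real.deriv_log,
    ← deriv_add (lg_diff <| by positivity) (Real.differentiableAt_log hx.ne')]
  apply Filter.EventuallyEq.deriv_eq
  filter_upwards [eventually_gt_nhds hx] with y hy using lg_rec hy

lemma deriv_lg_mono : MonotoneOn (deriv lg) (Set.Ioi 0) :=
  Real.convexOn_log_Gamma.monotoneOn_deriv (fun x hx => lg_diff hx)

lemma deriv_lg_one : deriv lg 1 = -γ := by
  have h : deriv lg 1 = deriv Real.Gamma 1 / Real.Gamma 1 := by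
    rw [lg, Function.comp_def,
      deriv.log (Real.differentiableAt_Gamma (fun m ↦ by
        intro h; have := (neg_nonpos.mpr (Nat.cast_nonneg m : (0:ℝ) ≤ m)); rw [← h] at this; linarith))
      (by rw [Real.Gamma_one]; norm_num)]
  rw [h, Real.Gamma_one, div_one, Real.eulerMascheroniConstant_eq_neg_deriv, neg_neg]

-- ==== from t2.lean ====



lemma deriv_lg_add_nat {x : ℝ} (hx : 0 < x) (N : ℕ) :
    deriv lg (x + N) = deriv lg x + ∑ q ∈ range N, 1 / (x + q) := by
  induction N with
  | zero => simp
  | succ n ih =>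
    have h1 : x + (n + 1 : ℕ) = (x + n) + 1 := by push_cast; ring
    rw [h1, deriv_lg_rec (by positivity), ih, Finset.sum_range_succ]
    ring

lemma lg_reflection {x : ℝ} (h0 : 0 < x) (h1 : x < 1) :
    deriv lg (1 - x) - deriv lg x = π * Real.cot (π * x) := by
  have hsin : Real.sin (π * x) ≠ 0 :=
    (Real.sin_pos_of_pos_of_lt_pi (by positivity)
      (by nlinarith [Real.pi_pos])).ne'
  -- derivative of g = fun y => lg y + lg (1 - y)
  have hg : HasDerivAt (fun y => lg y + lg (1 - y))
      (deriv lg x + deriv lg (1 - x) * (-1)) x := by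
    refine HasDerivAt.add ((lg_diff h0).hasDerivAt) ?_
    exact ((lg_diff (by linarith)).hasDerivAt).comp x
      (((hasDerivAt_id x).const_sub 1))
  -- derivative of h = fun y => log π - log (sin (π * y))
  have hh : HasDerivAt (fun y => Real.log π - Real.log (Real.sin (π * y)))
      (0 - π * Real.cos (π * x) / Real.sin (π * x)) x := by
    refine (hasDerivAt_const x (Real.log π)).sub ?_
    have hinner : HasDerivAt (fun y : ℝ => π * y) π x := by
      simpa using (hasDerivAt_id x).const_mul π
    have hs : HasDerivAt (fun y => Real.sin (π * y)) (Real.cos (π * x) * π) x := by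
      exact (Real.hasDerivAt_sin (π * x)).comp x hinner
    have := hs.log hsin
    rw [show π * Real.cos (π * x) / Real.sin (π * x) = Real.cos (π * x) * π / Real.sin (π * x) by ring]
    exact this
  -- they agree near x
  have heq : (fun y => lg y + lg (1 - y))
      =ᶠ[𝓝 x] (fun y => Real.log π - Real.log (Real.sin (π * y))) := by
    have hmem : Set.Ioo (0:ℝ) 1 ∈ 𝓝 x := isOpen_Ioo.mem_nhds ⟨h0, h1⟩
    filter_upwards [hmem] with y hy
    have hy0 : (0:ℝ) < y := hy.1
    have hy1 : y < 1 := hy.2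
    have hsy : Real.sin (π * y) ≠ 0 :=
      (Real.sin_pos_of_pos_of_lt_pi (by positivity) (by nlinarith [Real.pi_pos])).ne'
    have hΓ : Real.Gamma y * Real.Gamma (1 - y) = π / Real.sin (π * y) :=
      Real.Gamma_mul_Gamma_one_sub y
    have : lg y + lg (1 - y) = Real.log (Real.Gamma y * Real.Gamma (1 - y)) := by
      rw [Real.log_mul (Real.Gamma_ne_zero (fun m => (((neg_nonpos.mpr (Nat.cast_nonneg m)).trans_lt hy0).ne')))
        (Real.Gamma_ne_zero (fun m => (((neg_nonpos.mpr (Nat.cast_nonneg m)).trans_lt (by linarith : (0:ℝ) < 1 - y)).ne')))]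
      rfl
    rw [this, hΓ, Real.log_div (ne_of_gt Real.pi_pos) hsy]
  have h2 := hg.congr_of_eventuallyEq heq.symm
  have := hh.unique h2
  rw [Real.cot_eq_cos_div_sin, ← mul_div_assoc]
  linarith [this]

lemma tendsto_deriv_lg_diff {x : ℝ} (h0 : 0 < x) (h1 : x < 1) :
    Tendsto (fun N : ℕ => deriv lg (x + N) - deriv lg ((1 - x) + N)) atTop (𝓝 0) := by
  have key : ∀ N : ℕ, 1 ≤ N →
      |deriv lg (x + N) - deriv lg ((1 - x) + N)| ≤ 1 / N := by
    intro N hN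
    have hN0 : (0:ℝ) < N := by exact_mod_cast hN
    have hmem : ∀ y : ℝ, (N:ℝ) ≤ y → y ∈ Set.Ioi (0:ℝ) := fun y hy => lt_of_lt_of_le hN0 hy
    have hb : ∀ y : ℝ, 0 < y → y ≤ 1 → deriv lg (N:ℝ) ≤ deriv lg (y + N) ∧
        deriv lg (y + N) ≤ deriv lg ((N:ℝ) + 1) := by
      intro y hy0 hy1
      constructor
      · exact deriv_lg_mono (hmem _ le_rfl) (hmem _ (by linarith)) (by linarith)
      · exact deriv_lg_mono (hmem _ (by linarith)) (Set.mem_Ioi.mpr (by linarith)) (by linarith)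
    have h1' := hb x h0 h1.le
    have h2' := hb (1 - x) (by linarith) (by linarith)
    have hrec : deriv lg ((N:ℝ) + 1) = deriv lg N + 1 / N := deriv_lg_rec hN0
    rw [abs_le]
    exact ⟨by linarith [h1'.1, h2'.2], by linarith [h1'.2, h2'.1]⟩
  refine squeeze_zero_norm' ?_ tendsto_one_div_atTop_nhds_zero_nat
  filter_upwards [eventually_ge_atTop 1] with N hN using key N hN

lemma tendsto_cot_sum {x : ℝ} (h0 : 0 < x) (h1 : x < 1) :
    Tendsto (fun N : ℕ => ∑ q ∈ range N, (1 / ((q:ℝ) + x) - 1 / ((q:ℝ) + 1 - x)))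
      atTop (𝓝 (π * Real.cot (π * x))) := by
  have hx1 : (0:ℝ) < 1 - x := by linarith
  have key : ∀ N : ℕ, ∑ q ∈ range N, (1 / ((q:ℝ) + x) - 1 / ((q:ℝ) + 1 - x))
      = (deriv lg (1 - x) - deriv lg x) + (deriv lg (x + N) - deriv lg ((1 - x) + N)) := by
    intro N
    have e1 := deriv_lg_add_nat h0 N
    have e2 := deriv_lg_add_nat hx1 N
    have : ∑ q ∈ range N, (1 / ((q:ℝ) + x) - 1 / ((q:ℝ) + 1 - x))
        = ∑ q ∈ range N, 1 / (x + q) - ∑ q ∈ range N, 1 / ((1 - x) + q) := by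
      rw [← Finset.sum_sub_distrib]
      refine Finset.sum_congr rfl fun q _ => ?_
      ring_nf
    rw [this]
    rw [e1] at *
    rw [e2] at *
    ring
  simp only [key]
  rw [lg_reflection h0 h1]
  simpa using tendsto_const_nhds.add (tendsto_deriv_lg_diff h0 h1)


-- ==== from t3.lean ====



lemma H_eq_harmonic (n : ℕ) : H n = (harmonic n : ℝ) := by
  rw [H, harmonic]
  push_cast
  refine Finset.sum_congr rfl fun k _ => ?_
  rw [one_div]

noncomputable def u (n : ℕ) : ℝ := H n - Real.log n - γ

lemma tendsto_u_zero : Tendsto u atTop (𝓝 0) := by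
  have h := Real.tendsto_harmonic_sub_log
  have : Tendsto (fun n : ℕ => ((harmonic n : ℝ) - Real.log n) - γ) atTop (𝓝 (γ - γ)) :=
    h.sub tendsto_const_nhds
  rw [sub_self] at this
  refine this.congr fun n => ?_
  rw [u, H_eq_harmonic]

-- polynomial log bounds
lemma log_ub {t : ℝ} (h0 : 0 ≤ t) : Real.log (1 + t) ≤ t - t^2/2 + t^3/3 := by
  rcases eq_or_lt_of_le h0 with h|h0
  · simp [← h]
  have key : ∀ y ∈ Set.Ici (0:ℝ), 0 ≤ y → True := fun _ _ _ => trivial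
  -- φ y = y - y^2/2 + y^3/3 - log(1+y) is monotone on [0, ∞)
  have mono : MonotoneOn (fun y : ℝ => y - y^2/2 + y^3/3 - Real.log (1+y)) (Set.Ici 0) := by
    refine monotoneOn_of_deriv_nonneg (convex_Ici 0) ?_ ?_ ?_
    · refine ContinuousOn.sub (by fun_prop) ?_
      refine ContinuousOn.log (by fun_prop) fun y hy => ?_
      have : (0:ℝ) ≤ y := hy
      positivity
    · intro y hy
      rw [interior_Ici] at hy
      have hy0 : (0:ℝ) < y := hy
      refine DifferentiableAt.differentiableWithinAt ?_
      refine DifferentiableAt.sub (by fun_prop) ?_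
      refine DifferentiableAt.log (by fun_prop) (by positivity)
    · intro y hy
      rw [interior_Ici] at hy
      have hy0 : (0:ℝ) < y := hy
      have hd : HasDerivAt (fun y : ℝ => y - y^2/2 + y^3/3 - Real.log (1+y))
          (1 - 2*y/2 + 3*y^2/3 - (1/(1+y))) y := by
        have hlog : HasDerivAt (fun y : ℝ => Real.log (1+y)) (1/(1+y)) y := by
          have := (Real.hasDerivAt_log (by positivity : (1:ℝ)+y ≠ 0)).comp y
            ((hasDerivAt_id y).const_add 1)
          simpa [Function.comp_def] using this
        have h1 : HasDerivAt (fun y : ℝ => y - y^2/2 + y^3/3) (1 - 2*y/2 + 3*y^2/3) y := by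
          have := (((hasDerivAt_id y).sub ((hasDerivAt_pow 2 y).div_const 2)).add
            ((hasDerivAt_pow 3 y).div_const 3))
          simpa [Pi.add_def, Pi.sub_def] using this
        simpa [Pi.sub_def] using h1.sub hlog
      rw [hd.deriv]
      have : 1 - 2*y/2 + 3*y^2/3 - 1/(1+y) = y^3/(1+y) := by
        field_simp; ring
      rw [this]; positivity
  have := mono (Set.mem_Ici.mpr le_rfl) (Set.mem_Ici.mpr h0.le) h0.le
  norm_num at this
  linarith

lemma log_lb2 {t : ℝ} (h0 : 0 ≤ t) (h1 : t < 1) : Real.log (1 - t) ≤ -t - t^2/2 := by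
  rcases eq_or_lt_of_le h0 with h|h0
  · simp [← h]
  have mono : MonotoneOn (fun y : ℝ => -y - y^2/2 - Real.log (1-y)) (Set.Ico 0 1) := by
    refine monotoneOn_of_deriv_nonneg (convex_Ico 0 1) ?_ ?_ ?_
    · refine ContinuousOn.sub (by fun_prop) ?_
      refine ContinuousOn.log (by fun_prop) fun y hy => ?_
      have h1 : y < 1 := hy.2
      have : (0:ℝ) < 1 - y := by linarith
      positivity
    · intro y hy
      rw [interior_Ico] at hy
      have hy1 : y < 1 := hy.2
      have hpos : (0:ℝ) < 1 - y := by linarith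
      refine DifferentiableAt.differentiableWithinAt ?_
      refine DifferentiableAt.sub (by fun_prop) ?_
      refine DifferentiableAt.log (by fun_prop) (by positivity)
    · intro y hy
      rw [interior_Ico] at hy
      have hy0 : (0:ℝ) < y := hy.1
      have hy1 : y < 1 := hy.2
      have hpos : (0:ℝ) < 1 - y := by linarith
      have hd : HasDerivAt (fun y : ℝ => -y - y^2/2 - Real.log (1-y))
          (-1 - 2*y/2 - (-1/(1-y))) y := by
        have hlog : HasDerivAt (fun y : ℝ => Real.log (1-y)) (-1/(1-y)) y := by
          have := (Real.hasDerivAt_log (by positivity : (1:ℝ)-y ≠ 0)).comp y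
            ((hasDerivAt_id y).const_sub 1)
          simpa [div_eq_mul_inv, Function.comp_def] using this
        have h1 : HasDerivAt (fun y : ℝ => -y - y^2/2) (-1 - 2*y/2) y := by
          have := ((hasDerivAt_id y).neg.sub ((hasDerivAt_pow 2 y).div_const 2))
          simpa [Pi.neg_def, Pi.sub_def] using this
        simpa [Pi.sub_def] using h1.sub hlog
      rw [hd.deriv]
      have : -1 - 2*y/2 - (-1/(1-y)) = y^2/(1-y) := by
        field_simp; ring
      rw [this]; positivity
  have := mono (Set.mem_Ico.mpr ⟨le_rfl, one_pos⟩) (Set.mem_Ico.mpr ⟨h0.le, h1⟩) h0.le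
  simp only [Real.log_one] at this
  norm_num at this
  linarith

-- ==== from t4.lean ====



lemma tendsto_one_div_linear (a b : ℝ) (ha : 0 < a) :
    Tendsto (fun n : ℕ => 1/(a*(n:ℝ)+b)) atTop (𝓝 0) := by
  have h : Tendsto (fun n : ℕ => a*(n:ℝ)+b) atTop atTop :=
    tendsto_atTop_add_const_right _ b (Tendsto.const_mul_atTop ha tendsto_natCast_atTop_atTop)
  simpa [one_div, Pi.inv_def] using h.inv_tendsto_atTop

lemma u_sub (m : ℕ) (hm : 1 ≤ m) :
    u m - u (m + 1) = Real.log (1 + 1/(m:ℝ)) - 1/((m:ℝ)+1) := by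
  have hm0 : (0:ℝ) < m := by exact_mod_cast hm
  have hH : H (m+1) = H m + 1/((m:ℝ)+1) := by
    simp [H, Finset.sum_range_succ]
  have hlog : Real.log ((m:ℝ)+1) - Real.log m = Real.log (1 + 1/(m:ℝ)) := by
    rw [← Real.log_div (by positivity) (by positivity)]
    congr 1
    field_simp
  simp only [u, hH]
  push_cast
  rw [← hlog]
  ring

lemma term_lb (m : ℕ) (hm : 1 ≤ m) :
    1/(2*((m:ℝ)+1)) - 1/(2*((m:ℝ)+2)) ≤ Real.log (1 + 1/(m:ℝ)) - 1/((m:ℝ)+1) := by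
  have hm0 : (0:ℝ) < m := by exact_mod_cast hm
  set M : ℝ := (m:ℝ)
  have ht0 : (0:ℝ) ≤ 1/(M+1) := by positivity
  have ht1 : 1/(M+1) < 1 := by
    rw [div_lt_one (by positivity)]; linarith
  have hlog := log_lb2 ht0 ht1
  have hrw : Real.log (1 + 1/M) = -Real.log (1 - 1/(M+1)) := by
    rw [← Real.log_inv]
    congr 1
    field_simp
    rw [add_sub_cancel_right, div_self hm0.ne']
  rw [hrw]
  have e : 1/(2*(M+1)) - 1/(2*(M+2)) = 1/(2*(M+1)*(M+2)) := by
    field_simp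
    ring
  have e2 : (1/(M+1))^2/2 = 1/(2*(M+1)^2) := by
    rw [div_pow, one_pow, div_div, mul_comm]
  have hineq : 1/(2*(M+1)*(M+2)) ≤ 1/(2*(M+1)^2) := by
    apply one_div_le_one_div_of_le (by positivity)
    nlinarith
  rw [e]
  linarith [hlog, hineq, e2]

lemma term_ub (m : ℕ) (hm : 2 ≤ m) :
    Real.log (1 + 1/(m:ℝ)) - 1/((m:ℝ)+1) ≤
      (1/(2*(m:ℝ)) - 1/(2*((m:ℝ)+1))) + (1/(6*((m:ℝ)-1)*(m:ℝ)) - 1/(6*(m:ℝ)*((m:ℝ)+1))) := by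
  have hm2 : (2:ℝ) ≤ m := by exact_mod_cast hm
  set M : ℝ := (m:ℝ)
  have hM0 : (0:ℝ) < M := by linarith
  have hM1 : (0:ℝ) < M - 1 := by linarith
  have hlog := log_ub (t := 1/M) (by positivity)
  have e : ((1/(2*M) - 1/(2*(M+1))) + (1/(6*(M-1)*M) - 1/(6*M*(M+1))))
      - ((1/M - (1/M)^2/2 + (1/M)^3/3) - 1/(M+1))
      = (3*M^2 - 3*M + 2)/(6*(M-1)*M^3*(M+1)) := by
    field_simp
    ring
  have hnum : (0:ℝ) < 3*M^2 - 3*M + 2 := by nlinarith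
  have hpos : (0:ℝ) ≤ (3*M^2 - 3*M + 2)/(6*(M-1)*M^3*(M+1)) := by positivity
  linarith [hlog, e, hpos]

lemma sum_Ico_telescope (g : ℕ → ℝ) {n N : ℕ} (h : n ≤ N) :
    ∑ m ∈ Finset.Ico n N, (g m - g (m+1)) = g n - g N := by
  rw [Finset.sum_Ico_eq_sub _ h, Finset.sum_range_sub' g, Finset.sum_range_sub' g]
  ring

noncomputable def gl (m : ℕ) : ℝ := 1/(2*((m:ℝ)+1))
noncomputable def gu (m : ℕ) : ℝ := 1/(2*(m:ℝ)) + 1/(6*((m:ℝ)-1)*(m:ℝ))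

lemma tendsto_gl : Tendsto gl atTop (𝓝 0) :=
  (tendsto_one_div_linear 2 2 (by norm_num)).congr fun n => by
    simp only [gl]; ring_nf

lemma tendsto_gu : Tendsto gu atTop (𝓝 0) := by
  have h1 := tendsto_one_div_linear 2 0 (by norm_num : (0:ℝ) < 2)
  have h2 := (tendsto_one_div_linear 6 (-6) (by norm_num : (0:ℝ) < 6)).mul
    (tendsto_one_div_linear 1 0 (by norm_num : (0:ℝ) < 1))
  have h3 := h1.add (by simpa using h2)
  rw [add_zero] at h3
  refine h3.congr' ?_
  filter_upwards [eventually_ge_atTop 2] with n hn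
  have hn2 : (2:ℝ) ≤ n := by exact_mod_cast hn
  have h0 : (n:ℝ) ≠ 0 := by linarith
  have hne1 : (n:ℝ) - 1 ≠ 0 := by intro h; rw [sub_eq_zero] at h; linarith [h.symm]
  have hne6 : 6*(n:ℝ) + (-6) ≠ 0 := by intro h; nlinarith
  simp only [gu]
  rw [show (6*(n:ℝ)+(-6)) = 6*((n:ℝ)-1) by ring]
  field_simp
  ring

lemma u_lb {n : ℕ} (hn : 1 ≤ n) : gl n ≤ u n := by
  have key : ∀ᶠ N in atTop, gl n - gl N ≤ u n - u N := by
    filter_upwards [eventually_ge_atTop n] with N hN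
    rw [← sum_Ico_telescope u hN, ← sum_Ico_telescope gl hN]
    refine Finset.sum_le_sum fun m hm => ?_
    have hm1 : 1 ≤ m := le_trans hn (Finset.mem_Ico.mp hm).1
    rw [u_sub m hm1]
    have e : gl m - gl (m+1) = 1/(2*((m:ℝ)+1)) - 1/(2*((m:ℝ)+2)) := by
      simp only [gl]; push_cast; ring
    rw [e]
    exact term_lb m hm1
  have hL : Tendsto (fun N => gl n - gl N) atTop (𝓝 (gl n)) := by
    simpa using tendsto_gl.const_sub (gl n)
  have hR : Tendsto (fun N => u n - u N) atTop (𝓝 (u n)) := by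
    simpa using tendsto_u_zero.const_sub (u n)
  exact le_of_tendsto_of_tendsto hL hR key

lemma u_ub {n : ℕ} (hn : 2 ≤ n) : u n ≤ gu n := by
  have key : ∀ᶠ N in atTop, u n - u N ≤ gu n - gu N := by
    filter_upwards [eventually_ge_atTop n] with N hN
    rw [← sum_Ico_telescope u hN, ← sum_Ico_telescope gu hN]
    refine Finset.sum_le_sum fun m hm => ?_
    have hm2 : 2 ≤ m := le_trans hn (Finset.mem_Ico.mp hm).1
    have hm1 : 1 ≤ m := le_trans (by norm_num) hm2
    rw [u_sub m hm1]
    have e : gu m - gu (m+1) = (1/(2*(m:ℝ)) - 1/(2*((m:ℝ)+1)))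
        + (1/(6*((m:ℝ)-1)*(m:ℝ)) - 1/(6*(m:ℝ)*((m:ℝ)+1))) := by
      simp only [gu]; push_cast; ring
    rw [e]
    exact term_ub m hm2
  have hL : Tendsto (fun N => u n - u N) atTop (𝓝 (u n)) := by
    simpa using tendsto_u_zero.const_sub (u n)
  have hR : Tendsto (fun N => gu n - gu N) atTop (𝓝 (gu n)) := by
    simpa using tendsto_gu.const_sub (gu n)
  exact le_of_tendsto_of_tendsto hL hR key

lemma tendsto_mul_u : Tendsto (fun n : ℕ => (n:ℝ) * u n) atTop (𝓝 (1/2)) := by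
  have hlo : Tendsto (fun n : ℕ => (n:ℝ) * gl n) atTop (𝓝 (1/2)) := by
    have he : ∀ n : ℕ, (n:ℝ) * gl n = 1/2 - gl n := by
      intro n
      have h0 : ((n:ℝ)+1) ≠ 0 := by positivity
      simp only [gl]
      field_simp
      ring
    simp only [he]
    simpa using tendsto_gl.const_sub ((1:ℝ)/2)
  have hhi : Tendsto (fun n : ℕ => (n:ℝ) * gu n) atTop (𝓝 (1/2)) := by
    have h2 := tendsto_one_div_linear 6 (-6) (by norm_num : (0:ℝ) < 6)
    have hlim : Tendsto (fun n : ℕ => 1/2 + 1/(6*(n:ℝ)+(-6))) atTop (𝓝 (1/2)) := by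
      simpa using h2.const_add ((1:ℝ)/2)
    refine hlim.congr' ?_
    filter_upwards [eventually_ge_atTop 2] with n hn
    have hn2 : (2:ℝ) ≤ n := by exact_mod_cast hn
    have h0 : (n:ℝ) ≠ 0 := by linarith
    have hne1 : (n:ℝ) - 1 ≠ 0 := by intro h; rw [sub_eq_zero] at h; linarith [h.symm]
    have hne6 : 6*(n:ℝ) + (-6) ≠ 0 := by intro h; nlinarith
    simp only [gu]
    rw [show (6*(n:ℝ)+(-6)) = 6*((n:ℝ)-1) by ring]
    field_simp
  refine tendsto_of_tendsto_of_tendsto_of_le_of_le' hlo hhi ?_ ?_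
  · filter_upwards [eventually_ge_atTop 1] with n hn
    exact mul_le_mul_of_nonneg_left (u_lb hn) (Nat.cast_nonneg n)
  · filter_upwards [eventually_ge_atTop 2] with n hn
    exact mul_le_mul_of_nonneg_left (u_ub hn) (Nat.cast_nonneg n)

-- ==== from t5.lean ====

lemma log_stirling :
    Tendsto (fun N : ℕ => Real.log (N.factorial) - ((N:ℝ) + 1/2) * Real.log N + N)
      atTop (𝓝 (Real.log (2*π) / 2)) := by
  have hπ : (0:ℝ) < √π := Real.sqrt_pos.mpr Real.pi_pos
  have hcont := (Real.continuousAt_log hπ.ne').tendsto.comp Stirling.tendsto_stirlingSeq_sqrt_pi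
  have heq : ∀ᶠ N : ℕ in atTop, Real.log (Stirling.stirlingSeq N)
      = Real.log (N.factorial) - ((N:ℝ) + 1/2) * Real.log N + N - Real.log 2 / 2 := by
    filter_upwards [eventually_ge_atTop 1] with N hN
    have hN0 : (0:ℝ) < N := by exact_mod_cast hN
    rw [Stirling.stirlingSeq]
    rw [Real.log_div (by positivity) (by positivity), Real.log_mul (by positivity) (by positivity),
      Real.log_pow, Real.log_sqrt (by positivity), Real.log_mul (by norm_num) hN0.ne',
      Real.log_div hN0.ne' (Real.exp_pos 1).ne', Real.log_exp]
    push_cast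
    ring
  have h2 : Tendsto (fun N : ℕ => Real.log (N.factorial) - ((N:ℝ) + 1/2) * Real.log N + N
      - Real.log 2 / 2) atTop (𝓝 (Real.log (√π))) := hcont.congr' heq
  have h3 := h2.add (tendsto_const_nhds (x := Real.log 2 / 2))
  simp only [sub_add_cancel] at h3
  convert h3 using 2
  rw [Real.log_sqrt Real.pi_pos.le, Real.log_mul (by norm_num) Real.pi_pos.ne']
  ring

-- ==== from t6.lean ====



noncomputable def B (p r N : ℕ) : ℝ := ∑ q ∈ Finset.range N, 1/((p:ℝ)*q + r + 1)

lemma H_add (a b : ℕ) : H (a+b) = H a + ∑ r ∈ Finset.range b, 1/((a:ℝ)+r+1) := by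
  induction b with
  | zero => simp
  | succ b ih =>
    rw [← Nat.add_assoc, H, Finset.sum_range_succ, ← H, ih, Finset.sum_range_succ]
    push_cast
    ring

lemma H_p_mul (p : ℕ) (N : ℕ) : H (p*N) = ∑ r ∈ Finset.range p, B p r N := by
  induction N with
  | zero => simp [H, B]
  | succ N ih =>
    have e : p * (N+1) = p*N + p := by ring
    rw [e, H_add, ih, ← Finset.sum_add_distrib]
    refine Finset.sum_congr rfl fun r _ => ?_
    rw [B, B, Finset.sum_range_succ]
    push_cast
    ring

lemma abel_sum (p N : ℕ) : ∑ n ∈ Finset.range N, H (p*(n+1))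
    = ((N:ℝ)+1) * H (p*N) - ∑ n ∈ Finset.range N, ((n:ℝ)+1) * (H (p*(n+1)) - H (p*n)) := by
  induction N with
  | zero => simp [H]
  | succ N ih =>
    rw [Finset.sum_range_succ, ih, Finset.sum_range_succ]
    push_cast
    ring

lemma step3 (p : ℕ) (hp : 0 < p) (n : ℕ) :
    ((n:ℝ)+1) * (H (p*(n+1)) - H (p*n))
      = 1 + (1/(p:ℝ)) * ∑ r ∈ Finset.range p, ((p:ℝ)-(r:ℝ)-1) * (1/((p:ℝ)*n + r + 1)) := by
  have hp0 : (0:ℝ) < p := by exact_mod_cast hp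
  have hΔ : H (p*(n+1)) - H (p*n) = ∑ r ∈ Finset.range p, 1/((p:ℝ)*n + r + 1) := by
    have e : p * (n+1) = p*n + p := by ring
    rw [e, H_add]
    have e2 : ∀ r ∈ Finset.range p, 1/(((p*n:ℕ):ℝ)+r+1) = 1/((p:ℝ)*n + r + 1) := by
      intro r _; push_cast; ring
    rw [Finset.sum_congr rfl e2]
    ring
  rw [hΔ, Finset.mul_sum, Finset.mul_sum]
  have e2 : ∀ r ∈ Finset.range p, ((n:ℝ)+1) * (1/((p:ℝ)*n + r + 1))
      = 1/(p:ℝ) + (1/(p:ℝ)) * (((p:ℝ)-(r:ℝ)-1) * (1/((p:ℝ)*n + r + 1))) := by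
    intro r hr
    have hd : (0:ℝ) < (p:ℝ)*n + r + 1 := by positivity
    field_simp
    ring
  rw [Finset.sum_congr rfl e2, Finset.sum_add_distrib, Finset.sum_const, Finset.card_range,
    nsmul_eq_mul]
  field_simp

noncomputable def V (p N : ℕ) : ℝ := ∑ r ∈ Finset.range (p-1), ((p:ℝ)-2*(r:ℝ)-2) * B p r N

lemma cast_pred (p : ℕ) (hp : 0 < p) : (((p-1:ℕ)):ℝ) = (p:ℝ) - 1 :=
  Nat.cast_pred hp

lemma B_last (p : ℕ) (hp : 0 < p) (N : ℕ) : B p (p-1) N = H N / p := by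
  have hp0 : (0:ℝ) < p := by exact_mod_cast hp
  rw [B, H, Finset.sum_div]
  refine Finset.sum_congr rfl fun q _ => ?_
  rw [cast_pred p hp, div_div]
  congr 1
  ring

lemma coeff_sum_eq (p : ℕ) (hp : 0 < p) (N : ℕ) :
    ∑ r ∈ Finset.range p, ((p:ℝ)-(r:ℝ)-1) * B p r N
      = ((p:ℝ)/2) * H (p*N) + (1/2) * (V p N - H N) := by
  have hp0 : (0:ℝ) < p := by exact_mod_cast hp
  have hW : ∑ r ∈ Finset.range p, ((p:ℝ)-2*(r:ℝ)-2) * B p r N = V p N - H N := by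
    have e : p = (p-1) + 1 := (Nat.succ_pred_eq_of_pos hp).symm
    rw [e, Finset.sum_range_succ, ← e, ← V, B_last p hp, cast_pred p hp]
    field_simp
    ring
  have e3 : ∀ r ∈ Finset.range p, ((p:ℝ)-(r:ℝ)-1) * B p r N
      = ((p:ℝ)/2) * B p r N + (1/2) * (((p:ℝ)-2*(r:ℝ)-2) * B p r N) := by
    intro r _; ring
  rw [Finset.sum_congr rfl e3, Finset.sum_add_distrib, ← Finset.mul_sum, ← Finset.mul_sum,
    hW, ← H_p_mul]

lemma sum_H_eq (p : ℕ) (hp : 0 < p) (N : ℕ) :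
    ∑ n ∈ Finset.range N, H (p*(n+1))
      = ((N:ℝ)+1) * H (p*N) - (N:ℝ) - H (p*N)/2 - V p N/(2*(p:ℝ)) + H N/(2*(p:ℝ)) := by
  have hp0 : (0:ℝ) < p := by exact_mod_cast hp
  have hA : ∑ n ∈ Finset.range N, ((n:ℝ)+1) * (H (p*(n+1)) - H (p*n))
      = (N:ℝ) + (1/(p:ℝ)) * ∑ r ∈ Finset.range p, ((p:ℝ)-(r:ℝ)-1) * B p r N := by
    have h1 : ∑ n ∈ Finset.range N, ((n:ℝ)+1) * (H (p*(n+1)) - H (p*n))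
        = ∑ n ∈ Finset.range N, (1 + (1/(p:ℝ)) * ∑ r ∈ Finset.range p,
            ((p:ℝ)-(r:ℝ)-1) * (1/((p:ℝ)*(n:ℝ) + (r:ℝ) + 1))) :=
      Finset.sum_congr rfl (fun n _ => step3 p hp n)
    rw [h1, Finset.sum_add_distrib, Finset.sum_const, Finset.card_range, nsmul_eq_mul,
      mul_one, ← Finset.mul_sum]
    have hcomm : (∑ n ∈ Finset.range N, ∑ r ∈ Finset.range p,
          ((p:ℝ)-(r:ℝ)-1) * (1/((p:ℝ)*(n:ℝ) + (r:ℝ) + 1)))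
        = ∑ r ∈ Finset.range p, ∑ n ∈ Finset.range N,
          ((p:ℝ)-(r:ℝ)-1) * (1/((p:ℝ)*(n:ℝ) + (r:ℝ) + 1)) := Finset.sum_comm
    have h2 : (∑ r ∈ Finset.range p, ∑ n ∈ Finset.range N,
          ((p:ℝ)-(r:ℝ)-1) * (1/((p:ℝ)*(n:ℝ) + (r:ℝ) + 1)))
        = ∑ r ∈ Finset.range p, ((p:ℝ)-(r:ℝ)-1) * B p r N :=
      Finset.sum_congr rfl fun r _ => by rw [B, Finset.mul_sum]
    rw [hcomm, h2]
  rw [abel_sum, hA, coeff_sum_eq p hp N]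
  field_simp
  ring

-- ==== from t7.lean ====


lemma cot_pi_sub (y : ℝ) : Real.cot (π - y) = -Real.cot y := by
  rw [Real.cot_eq_cos_div_sin, Real.cot_eq_cos_div_sin, Real.cos_pi_sub, Real.sin_pi_sub,
    neg_div]

lemma cast_sub2 {p j : ℕ} (h : j < p - 1) : (((p-2-j:ℕ)):ℝ) = (p:ℝ)-2-(j:ℝ) := by
  have h2 : 2 + j ≤ p := by omega
  have : p - 2 - j = p - (2+j) := by omega
  rw [this, Nat.cast_sub h2]
  push_cast
  ring

lemma v_reflect (p : ℕ) (N : ℕ) : V p N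
    = (1/2) * ∑ r ∈ Finset.range (p-1), ((p:ℝ)-2*(r:ℝ)-2) * (B p r N - B p (p-2-r) N) := by
  have hrefl := Finset.sum_range_reflect
    (fun r => ((p:ℝ)-2*(r:ℝ)-2) * B p r N) (p-1)
  have e0 : ∀ j, p - 1 - 1 - j = p - 2 - j := fun j => by omega
  simp only [e0] at hrefl
  have hneg : ∑ j ∈ Finset.range (p-1), ((p:ℝ)-2*(j:ℝ)-2) * B p (p-2-j) N = - V p N := by
    have e1 : ∀ j ∈ Finset.range (p-1), ((p:ℝ)-2*(j:ℝ)-2) * B p (p-2-j) N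
        = -(((p:ℝ) - 2*(((p-2-j:ℕ)):ℝ) - 2) * B p (p-2-j) N) := by
      intro j hj
      rw [cast_sub2 (Finset.mem_range.mp hj)]
      ring
    rw [Finset.sum_congr rfl e1, Finset.sum_neg_distrib, hrefl]
    rfl
  have e2 : ∀ r ∈ Finset.range (p-1), ((p:ℝ)-2*(r:ℝ)-2) * (B p r N - B p (p-2-r) N)
      = ((p:ℝ)-2*(r:ℝ)-2) * B p r N - ((p:ℝ)-2*(r:ℝ)-2) * B p (p-2-r) N :=
    fun r _ => mul_sub _ _ _
  rw [Finset.sum_congr rfl e2, Finset.sum_sub_distrib, hneg]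
  have : ∑ r ∈ Finset.range (p-1), ((p:ℝ)-2*(r:ℝ)-2) * B p r N = V p N := rfl
  rw [this]
  ring

-- the per-residue limit
lemma tendsto_B_diff (p : ℕ) (hp : 0 < p) {r : ℕ} (hr : r < p - 1) :
    Tendsto (fun N => B p r N - B p (p-2-r) N) atTop
      (𝓝 ((1/(p:ℝ)) * (π * Real.cot (π * (((r:ℝ)+1)/(p:ℝ)))))) := by
  have hp0 : (0:ℝ) < p := by exact_mod_cast hp
  have hrp : (r:ℝ) + 1 < p := by
    have : r + 1 < p := by omega
    exact_mod_cast this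
  set x : ℝ := ((r:ℝ)+1)/(p:ℝ) with hx
  have h0 : 0 < x := by positivity
  have h1 : x < 1 := by rw [hx, div_lt_one hp0]; linarith
  have h := (tendsto_cot_sum h0 h1).const_mul (1/(p:ℝ))
  refine h.congr fun N => ?_
  rw [Finset.mul_sum, B, B, ← Finset.sum_sub_distrib]
  refine Finset.sum_congr rfl fun q _ => ?_
  rw [cast_sub2 hr]
  have hd1 : (p:ℝ)*q + r + 1 = (p:ℝ) * ((q:ℝ) + x) := by
    rw [hx]; field_simp; ring
  have hd2 : (p:ℝ)*q + ((p:ℝ)-2-(r:ℝ)) + 1 = (p:ℝ) * ((q:ℝ) + 1 - x) := by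
    rw [hx]; field_simp; ring
  rw [hd1, hd2, mul_sub]
  simp only [one_div, mul_inv]

noncomputable def cg (p r : ℕ) : ℝ := Real.cot (π * (((r:ℝ)+1)/(p:ℝ)))

lemma Jp_eq (p : ℕ) (hp : 0 < p) :
    Jp p = ∑ r ∈ Finset.range (p-1), ((r:ℝ)+1) * cg p r := by
  have e : Finset.Icc 1 (p-1) = Finset.Ico 1 p := by
    rw [← Finset.Ico_add_one_right_eq_Icc]
    congr 1
    omega
  rw [Jp, e, Finset.sum_Ico_eq_sum_range]
  refine Finset.sum_congr rfl fun r _ => ?_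
  rw [cg]
  have harg : ((1+r:ℕ):ℝ) * π / p = π * (((r:ℝ)+1)/(p:ℝ)) := by
    push_cast; ring
  rw [harg]
  push_cast; ring

lemma cg_sum_zero (p : ℕ) (hp : 0 < p) :
    ∑ r ∈ Finset.range (p-1), cg p r = 0 := by
  have hp0 : (0:ℝ) < p := by exact_mod_cast hp
  have hrefl := Finset.sum_range_reflect (fun r => cg p r) (p-1)
  have hneg : ∑ j ∈ Finset.range (p-1), cg p j = - ∑ j ∈ Finset.range (p-1), cg p j := by
    nth_rewrite 1 [← hrefl]
    rw [← Finset.sum_neg_distrib]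
    refine Finset.sum_congr rfl fun j hj => ?_
    have hj' : j < p - 1 := Finset.mem_range.mp hj
    have e1 : p - 1 - 1 - j = p - 2 - j := by omega
    rw [e1, cg, cg, cast_sub2 hj']
    have harg : π * (((p:ℝ)-2-(j:ℝ)+1)/(p:ℝ)) = π - π * (((j:ℝ)+1)/(p:ℝ)) := by
      field_simp; ring
    rw [harg, cot_pi_sub]
  linarith [hneg]

lemma tendsto_V (p : ℕ) (hp : 0 < p) :
    Tendsto (fun N => V p N) atTop (𝓝 (-(π/(p:ℝ)) * Jp p)) := by
  have hp0 : (0:ℝ) < p := by exact_mod_cast hp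
  have hsum : Tendsto (fun N => ∑ r ∈ Finset.range (p-1),
      ((p:ℝ)-2*(r:ℝ)-2) * (B p r N - B p (p-2-r) N)) atTop
      (𝓝 (∑ r ∈ Finset.range (p-1),
        ((p:ℝ)-2*(r:ℝ)-2) * ((1/(p:ℝ)) * (π * cg p r)))) := by
    refine tendsto_finset_sum _ fun r hr => ?_
    exact (tendsto_B_diff p hp (Finset.mem_range.mp hr)).const_mul _
  have h2 := hsum.const_mul (1/2 : ℝ)
  have heq : ∀ N, (1/2 : ℝ) * ∑ r ∈ Finset.range (p-1),
      ((p:ℝ)-2*(r:ℝ)-2) * (B p r N - B p (p-2-r) N) = V p N :=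
    fun N => (v_reflect p N).symm
  have hlim : (1/2 : ℝ) * (∑ r ∈ Finset.range (p-1),
      ((p:ℝ)-2*(r:ℝ)-2) * ((1/(p:ℝ)) * (π * cg p r))) = -(π/(p:ℝ)) * Jp p := by
    have e : ∀ r ∈ Finset.range (p-1), ((p:ℝ)-2*(r:ℝ)-2) * ((1/(p:ℝ)) * (π * cg p r))
        = (π/(p:ℝ)) * ((p:ℝ) * cg p r) - (π/(p:ℝ)) * (2 * (((r:ℝ)+1) * cg p r)) := by
      intro r _
      field_simp
      ring
    rw [Finset.sum_congr rfl e, Finset.sum_sub_distrib, ← Finset.mul_sum, ← Finset.mul_sum,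
      ← Finset.mul_sum, ← Finset.mul_sum, cg_sum_zero p hp, ← Jp_eq p hp]
    ring
  rw [← hlim]
  refine h2.congr heq

-- ==== from t8.lean ====



lemma sum_log_eq (N : ℕ) :
    ∑ n ∈ Finset.range N, Real.log ((n:ℝ)+1) = Real.log (N.factorial) := by
  induction N with
  | zero => simp
  | succ N ih =>
    rw [Finset.sum_range_succ, ih, Nat.factorial_succ]
    rw [show ((((N+1) * N.factorial : ℕ)):ℝ) = ((N:ℝ)+1) * (N.factorial:ℝ) by push_cast; ring]
    rw [Real.log_mul (by positivity) (by exact_mod_cast N.factorial_pos.ne')]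
    ring

theorem pi_Jp_eq (p : ℕ) (hp : 0 < p) :
    ∃ C : ℝ,
      Tendsto (fun N => ∑ n ∈ Finset.range N,
          (H (p * (n + 1)) - Real.log ((p : ℝ) * (n + 1)) - Real.eulerMascheroniConstant
            - 1 / (2 * (p : ℝ) * (n + 1)))) atTop (𝓝 C) ∧
      π * Jp p = -(p : ℝ) ^ 2 * Real.log p
        + (Real.log (2 * π) - Real.eulerMascheroniConstant) * (p : ℝ) ^ 2
        - p + 2 * (p : ℝ) ^ 2 * C := by
  have hp0 : (0:ℝ) < p := by exact_mod_cast hp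
  set C : ℝ := 1/(2*(p:ℝ)) + (1/2) * Real.log p + γ/2 + (-(Real.log (2*π)/2))
      - (-(π/(p:ℝ)) * Jp p / (2*(p:ℝ))) with hC
  refine ⟨C, ?_, ?_⟩
  · -- convergence
    -- exact closed form of the partial sums
    have key : ∀ N : ℕ, ∑ n ∈ Finset.range N,
        (H (p * (n + 1)) - Real.log ((p : ℝ) * (n + 1)) - γ - 1 / (2 * (p : ℝ) * (n + 1)))
        = ((N:ℝ)+1/2) * H (p*N) - N - V p N/(2*(p:ℝ)) - N * Real.log p
          - Real.log (N.factorial) - N*γ := by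
      intro N
      have e1 : ∀ n ∈ Finset.range N,
          (H (p * (n + 1)) - Real.log ((p : ℝ) * (n + 1)) - γ - 1 / (2 * (p : ℝ) * (n + 1)))
          = H (p * (n + 1)) - (Real.log p + Real.log ((n:ℝ)+1)) - γ
            - (1/(2*(p:ℝ))) * ((1:ℝ)/((n:ℝ)+1)) := by
        intro n _
        rw [Real.log_mul hp0.ne' (by positivity)]
        congr 1
        rw [div_mul_div_comm]
        norm_num
      rw [Finset.sum_congr rfl e1]
      simp only [Finset.sum_sub_distrib, Finset.sum_add_distrib, Finset.sum_const,
        Finset.card_range, nsmul_eq_mul, ← Finset.mul_sum]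
      rw [sum_log_eq, sum_H_eq p hp N]
      have : ∑ n ∈ Finset.range N, (1:ℝ)/((n:ℝ)+1) = H N := rfl
      rw [this]
      ring
    -- eventual decomposition into convergent pieces
    have key2 : ∀ᶠ N : ℕ in atTop, ∑ n ∈ Finset.range N,
        (H (p * (n + 1)) - Real.log ((p : ℝ) * (n + 1)) - γ - 1 / (2 * (p : ℝ) * (n + 1)))
        = ((N:ℝ)+1/2) * u (p*N) + ((1/2) * Real.log p + γ/2)
          + ((N:ℝ)*Real.log N + (1/2)*Real.log N - N - Real.log (N.factorial))
          - V p N/(2*(p:ℝ)) := by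
      filter_upwards [eventually_ge_atTop 1] with N hN
      have hN0 : (0:ℝ) < N := by exact_mod_cast hN
      have hu : u (p*N) = H (p*N) - (Real.log p + Real.log N) - γ := by
        rw [u]
        congr 2
        rw [show (((p*N:ℕ)):ℝ) = (p:ℝ)*(N:ℝ) by push_cast; ring]
        exact Real.log_mul hp0.ne' hN0.ne'
      rw [key N, hu]
      ring
    -- limits
    have TA : Tendsto (fun N : ℕ => ((N:ℝ)+1/2) * u (p*N)) atTop (𝓝 (1/(2*(p:ℝ)))) := by
      have hme : Tendsto (fun N : ℕ => p*N) atTop atTop :=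
        tendsto_atTop_mono (fun N => Nat.le_mul_of_pos_left N hp) tendsto_id
      have h1 : Tendsto (fun N : ℕ => (((p*N:ℕ)):ℝ) * u (p*N)) atTop (𝓝 (1/2)) :=
        tendsto_mul_u.comp hme
      have h2 : Tendsto (fun N : ℕ => 1/(p:ℝ) + 1/(2*(p:ℝ)*(N:ℝ)+0)) atTop
          (𝓝 (1/(p:ℝ) + 0)) :=
        tendsto_const_nhds.add (tendsto_one_div_linear (2*(p:ℝ)) 0 (by positivity))
      have h3 := h1.mul h2
      have harith : (1/2 : ℝ) * (1/(p:ℝ) + 0) = 1/(2*(p:ℝ)) := by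
        rw [add_zero]
        field_simp
      rw [harith] at h3
      refine h3.congr' ?_
      filter_upwards [eventually_ge_atTop 1] with N hN
      have hN0 : (0:ℝ) < N := by exact_mod_cast hN
      push_cast
      field_simp
      ring
    have TB : Tendsto (fun N : ℕ => (N:ℝ)*Real.log N + (1/2)*Real.log N - N
        - Real.log (N.factorial)) atTop (𝓝 (-(Real.log (2*π)/2))) := by
      have := log_stirling.neg
      refine this.congr fun N => ?_
      ring
    have TC : Tendsto (fun N : ℕ => V p N / (2*(p:ℝ))) atTop
        (𝓝 (-(π/(p:ℝ)) * Jp p / (2*(p:ℝ)))) := (tendsto_V p hp).div_const _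
    have total := ((TA.add (tendsto_const_nhds (x := (1/2) * Real.log p + γ/2))).add TB).sub TC
    have hCe : C = 1/(2*(p:ℝ)) + ((1/2) * Real.log p + γ/2) + (-(Real.log (2*π)/2))
        - (-(π/(p:ℝ)) * Jp p / (2*(p:ℝ))) := by rw [hC]; ring
    rw [hCe]
    exact total.congr' (key2.mono fun N h => h.symm)
  · rw [hC]
    have hp2 : ((p:ℝ))^2 ≠ 0 := by positivity
    field_simp
    ring
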